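/- arXiv:1308.6359 — 7 statements merged into one kernel-verified Lean document; each statement's English description precedes it below -/
import Mathlib

section
/- Let A ∈ M_q and B ∈ M_p be complex matrices, and suppose B = Σ_{j=1}^r F_j A F_j* where F_1,...,F_r ∈ M_{p,q} satisfy Σ_{j=1}^r F_j* F_j = I_q. Then for any unitarily invariant norm ‖·‖ on M_{pr}, we have ‖I_r ⊗ B‖ ≤ r · ‖A ⊕ 0‖, where A ⊕ 0 denotes the block-diagonal matrix in M_{pr} with A in the top-left block and zeros elsewhere. -/
open Matrix

private lemma sum_dite_lt {n q : ℕ} (h : q ≤ n) (H : Fin q → ℂ) :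
    ∑ i : Fin n, (if hi : (i : ℕ) < q then H ⟨i, hi⟩ else 0) = ∑ i : Fin q, H i := by
  rw [Fin.sum_univ_eq_sum_range (fun i => if hi : i < q then H ⟨i, hi⟩ else 0) n,
    show (∑ i : Fin q, H i) = ∑ i : Fin q,
      (fun i : ℕ => if hi : i < q then H ⟨i, hi⟩ else 0) (i : ℕ) from
      Finset.sum_congr rfl (fun i _ => by simp),
    Fin.sum_univ_eq_sum_range (fun i : ℕ => if hi : i < q then H ⟨i, hi⟩ else 0) q]
  symm
  apply Finset.sum_subset (Finset.range_subset_range.mpr h)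
  intro x _ hx
  rw [Finset.mem_range] at hx
  simp [hx]

private lemma sum2_dite {n q : ℕ} (h : q ≤ n) (H : Fin q → Fin q → ℂ) (u v : Fin n → ℂ) :
    ∑ j : Fin n, ∑ i : Fin n,
      u i * (if hh : (i : ℕ) < q ∧ (j : ℕ) < q then H ⟨i, hh.1⟩ ⟨j, hh.2⟩ else 0) * v j
    = ∑ j : Fin q, ∑ i : Fin q, u (Fin.castLE h i) * H i j * v (Fin.castLE h j) := by
  have step : ∀ j : Fin n, (∑ i : Fin n,
      u i * (if hh : (i : ℕ) < q ∧ (j : ℕ) < q then H ⟨i, hh.1⟩ ⟨j, hh.2⟩ else 0) * v j)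
      = (if hj : (j : ℕ) < q then
          ∑ i : Fin q, u (Fin.castLE h i) * H i ⟨j, hj⟩ * v (Fin.castLE h ⟨(j : ℕ), hj⟩)
        else 0) := by
    intro j
    by_cases hj : (j : ℕ) < q
    · rw [dif_pos hj,
        ← sum_dite_lt h (fun i => u (Fin.castLE h i) * H i ⟨j, hj⟩ * v (Fin.castLE h ⟨(j:ℕ), hj⟩))]
      apply Finset.sum_congr rfl
      intro i _
      by_cases hi : (i : ℕ) < q
      · rw [dif_pos hi, dif_pos (⟨hi, hj⟩ : (i : ℕ) < q ∧ (j : ℕ) < q)]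
        have h1 : Fin.castLE h ⟨(i : ℕ), hi⟩ = i := rfl
        have h2 : Fin.castLE h ⟨(j : ℕ), hj⟩ = j := rfl
        rw [h1, h2]
      · rw [dif_neg hi, dif_neg (by tauto)]
        simp
    · rw [dif_neg hj]
      apply Finset.sum_eq_zero
      intro i _
      rw [dif_neg (by tauto)]
      simp
  rw [Finset.sum_congr rfl (fun j _ => step j),
    sum_dite_lt h (fun j => ∑ i : Fin q, u (Fin.castLE h i) * H i j * v (Fin.castLE h j))]

private lemma conj_zeta_mul (r : ℕ) :
    (starRingEnd ℂ) (Complex.exp (2 * Real.pi * Complex.I / r)) *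
      Complex.exp (2 * Real.pi * Complex.I / r) = 1 := by
  rw [← Complex.exp_conj, ← Complex.exp_add,
    show (starRingEnd ℂ) (2 * Real.pi * Complex.I / r) + 2 * Real.pi * Complex.I / r
      = 0 from by
        simp [map_div₀, _root_.map_mul, map_ofNat, Complex.conj_I, Complex.conj_ofReal]
        ring]
  exact Complex.exp_zero

private lemma root_sum {r : ℕ} (hr : 0 < r) (l m : Fin r) :
    ∑ t : Fin r, (Complex.exp (2 * Real.pi * Complex.I / r)) ^ ((t : ℕ) * (l : ℕ)) *
      (starRingEnd ℂ) ((Complex.exp (2 * Real.pi * Complex.I / r)) ^ ((t : ℕ) * (m : ℕ)))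
      = if l = m then (r : ℂ) else 0 := by
  set ζ : ℂ := Complex.exp (2 * Real.pi * Complex.I / r) with hζ
  have hprim : IsPrimitiveRoot ζ r := Complex.isPrimitiveRoot_exp r hr.ne'
  have hζr : ζ ^ r = 1 := hprim.pow_eq_one
  have hζ0 : ζ ≠ 0 := Complex.exp_ne_zero _
  have hconj : (starRingEnd ℂ) ζ = ζ⁻¹ := by
    have h1 : (starRingEnd ℂ) ζ * ζ = 1 := conj_zeta_mul r
    field_simp at h1 ⊢
    linear_combination h1
  set μ : ℂ := ζ ^ (l : ℕ) * (ζ ^ (m : ℕ))⁻¹ with hμ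
  have hterm : ∀ t : Fin r, ζ ^ ((t : ℕ) * (l : ℕ)) *
      (starRingEnd ℂ) (ζ ^ ((t : ℕ) * (m : ℕ))) = μ ^ (t : ℕ) := by
    intro t
    rw [map_pow, hconj, mul_comm (t : ℕ) (l : ℕ), mul_comm (t : ℕ) (m : ℕ),
      pow_mul, pow_mul, ← mul_pow, hμ, inv_pow]
  rw [Finset.sum_congr rfl (fun t _ => hterm t), Fin.sum_univ_eq_sum_range (fun t => μ ^ t) r]
  by_cases h : l = m
  · subst h
    simp [hμ, mul_inv_cancel₀ (pow_ne_zero _ hζ0)]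
  · have hμr : μ ^ r = 1 := by
      rw [hμ, mul_pow, inv_pow, ← pow_mul, ← pow_mul, mul_comm (l : ℕ) r, mul_comm (m : ℕ) r,
        pow_mul, pow_mul, hζr, one_pow, one_pow]
      simp
    have hμ1 : μ ≠ 1 := by
      intro hc
      apply h
      have : ζ ^ (l : ℕ) = ζ ^ (m : ℕ) := by
        rw [hμ, mul_inv_eq_one₀ (pow_ne_zero _ hζ0)] at hc
        exact hc
      exact Fin.ext (hprim.pow_inj l.2 m.2 this)
    rw [geom_sum_eq hμ1, hμr]
    simp [h]

/-- If `B = ∑ j, F j * A * (F j)ᴴ` with `∑ j, (F j)ᴴ * F j = 1`, then for any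
unitarily invariant norm `N` on `M_{rp}`, `N (I_r ⊗ B) ≤ r * N (A ⊕ 0)`. -/
theorem kron_norm_le {p q r : ℕ} (hq : q ≤ r * p)
    (N : Matrix (Fin (r * p)) (Fin (r * p)) ℂ → ℝ)
    (hN_add : ∀ X Y, N (X + Y) ≤ N X + N Y)
    (hN_smul : ∀ (c : ℂ) X, N (c • X) = ‖c‖ * N X)
    (hN_unitary : ∀ (U V : Matrix.unitaryGroup (Fin (r * p)) ℂ) X,
      N ((U : Matrix (Fin (r * p)) (Fin (r * p)) ℂ) * X * (V : Matrix (Fin (r * p)) (Fin (r * p)) ℂ)) = N X)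
    (A : Matrix (Fin q) (Fin q) ℂ) (B : Matrix (Fin p) (Fin p) ℂ)
    (F : Fin r → Matrix (Fin p) (Fin q) ℂ)
    (hB : B = ∑ j, F j * A * (F j)ᴴ)
    (hF : ∑ j, (F j)ᴴ * F j = 1) :
    N (Matrix.reindex finProdFinEquiv finProdFinEquiv
        (Matrix.kroneckerMap (· * ·) (1 : Matrix (Fin r) (Fin r) ℂ) B))
      ≤ (r : ℝ) * N (Matrix.of fun i j =>
          if h : (i : ℕ) < q ∧ (j : ℕ) < q then A ⟨i, h.1⟩ ⟨j, h.2⟩ else 0) := by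
  classical
  -- trivial facts about N
  have hN0 : N 0 = 0 := by
    have := hN_smul 0 0
    simpa using this
  have hNsum : ∀ {ι : Type} (s : Finset ι) (f : ι → Matrix (Fin (r * p)) (Fin (r * p)) ℂ),
      N (∑ i ∈ s, f i) ≤ ∑ i ∈ s, N (f i) := by
    intro ι s f
    induction s using Finset.cons_induction with
    | empty => simp [hN0]
    | cons a s ha ih =>
      rw [Finset.sum_cons, Finset.sum_cons]
      exact le_trans (hN_add _ _) (by linarith)
  have hNconj : ∀ (Wm X : Matrix (Fin (r * p)) (Fin (r * p)) ℂ),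
      Wm ∈ Matrix.unitaryGroup (Fin (r * p)) ℂ → N (Wm * X * Wmᴴ) = N X := by
    intro Wm X hW
    have := hN_unitary ⟨Wm, hW⟩ (star ⟨Wm, hW⟩) X
    simpa [Unitary.coe_star, Matrix.star_eq_conjTranspose] using this
  -- degenerate case
  rcases Nat.eq_zero_or_pos (r * p) with hrp | hrp
  · haveI : IsEmpty (Fin (r * p)) := by rw [hrp]; exact Fin.isEmpty'
    have hall : ∀ X : Matrix (Fin (r * p)) (Fin (r * p)) ℂ, N X = 0 := by
      intro X
      have h1 : (0 : ℂ) • X = X := Subsingleton.elim _ _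
      have := hN_smul 0 X
      rw [h1] at this
      simpa using this
    rw [hall, hall]
    simp
  have hr : 0 < r := Nat.pos_of_ne_zero (fun h => by simp [h] at hrp)
  haveI : NeZero r := ⟨hr.ne'⟩
  set e : Fin r × Fin p ≃ Fin (r * p) := finProdFinEquiv with he
  set Aq0 : Matrix (Fin (r * p)) (Fin (r * p)) ℂ := Matrix.of (fun i j =>
    if h : (i : ℕ) < q ∧ (j : ℕ) < q then A ⟨i, h.1⟩ ⟨j, h.2⟩ else 0) with hAq0
  set G : Matrix (Fin (r * p)) (Fin q) ℂ :=
    Matrix.of (fun i j => F (e.symm i).1 (e.symm i).2 j) with hGdef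
  set M : Matrix (Fin (r * p)) (Fin (r * p)) ℂ := G * A * Gᴴ with hMdef
  -- G is an isometry
  have hGG : Gᴴ * G = 1 := by
    ext j k
    rw [Matrix.mul_apply, ← Equiv.sum_comp e (fun i => (Gᴴ) j i * G i k)]
    have : ∀ x : Fin r × Fin p, (Gᴴ) j (e x) * G (e x) k
        = (starRingEnd ℂ) (F x.1 x.2 j) * F x.1 x.2 k := by
      intro x
      simp [hGdef, Matrix.conjTranspose_apply]
    rw [Finset.sum_congr rfl (fun x _ => this x), Fintype.sum_prod_type]
    have h1 := congrFun (congrFun (congrArg (fun X => X) hF) j) k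
    have h2 : (∑ c : Fin r, (F c)ᴴ * F c) j k = (1 : Matrix (Fin q) (Fin q) ℂ) j k := by
      rw [hF]
    rw [Matrix.sum_apply] at h2
    rw [← h2]
    apply Finset.sum_congr rfl
    intro c _
    rw [Matrix.mul_apply]
    simp [Matrix.conjTranspose_apply, mul_comm]
  -- entries of M
  have hM : ∀ i i', M i i'
      = (F (e.symm i).1 * A * (F (e.symm i').1)ᴴ) (e.symm i).2 (e.symm i').2 := by
    intro i i'
    simp [hMdef, hGdef, Matrix.mul_apply, Matrix.conjTranspose_apply]
  -- step A: N M = N Aq0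
  have hMA : N M = N Aq0 := by
    let v : Fin (r * p) → EuclideanSpace ℂ (Fin (r * p)) := fun i =>
      if h : (i : ℕ) < q then WithLp.toLp 2 (fun x => G x ⟨(i : ℕ), h⟩) else 0
    have horth : Orthonormal ℂ (Set.domRestrict {i : Fin (r * p) | (i : ℕ) < q} v) := by
      rw [orthonormal_iff_ite]
      intro a b
      have ha : ((a : Fin (r * p)) : ℕ) < q := a.2
      have hb : ((b : Fin (r * p)) : ℕ) < q := b.2
      simp only [Set.domRestrict_apply, v, dif_pos ha, dif_pos hb]
      rw [PiLp.inner_apply]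
      simp only [RCLike.inner_apply', PiLp.toLp_apply]
      have h1 : ∑ x : Fin (r * p), (starRingEnd ℂ) (G x ⟨_, ha⟩) * G x ⟨_, hb⟩
          = if ((⟨_, ha⟩ : Fin q) = ⟨_, hb⟩) then (1 : ℂ) else 0 := by
        have h0 := congrFun (congrFun hGG ⟨((a : Fin (r * p)) : ℕ), ha⟩)
          ⟨((b : Fin (r * p)) : ℕ), hb⟩
        rw [Matrix.mul_apply] at h0
        simpa [Matrix.conjTranspose_apply, Matrix.one_apply] using h0
      have h2 : ((⟨((a : Fin (r * p)) : ℕ), ha⟩ : Fin q) = ⟨((b : Fin (r * p)) : ℕ), hb⟩)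
          ↔ a = b := by
        rw [Fin.mk.injEq, ← Fin.ext_iff, ← Subtype.ext_iff]
      rw [h1, if_congr h2 rfl rfl]
    have hcard : Module.finrank ℂ (EuclideanSpace ℂ (Fin (r * p)))
        = Fintype.card (Fin (r * p)) := by simp
    obtain ⟨b, hb⟩ := horth.exists_orthonormalBasis_extension_of_card_eq hcard
    set U0 : Matrix (Fin (r * p)) (Fin (r * p)) ℂ := Matrix.of (fun x i => b i x) with hU0def
    have hU0 : U0 ∈ Matrix.unitaryGroup (Fin (r * p)) ℂ := by
      rw [Matrix.mem_unitaryGroup_iff']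
      ext i j
      have h1 := orthonormal_iff_ite.mp b.orthonormal i j
      rw [PiLp.inner_apply] at h1
      simp only [RCLike.inner_apply'] at h1
      simpa [Matrix.mul_apply, hU0def, Matrix.star_eq_conjTranspose,
        Matrix.conjTranspose_apply, Matrix.one_apply] using h1
    have hbv : ∀ (iq : Fin q) (x : Fin (r * p)), b (Fin.castLE hq iq) x = G x iq := by
      intro iq x
      have hmem : (Fin.castLE hq iq) ∈ {i : Fin (r * p) | (i : ℕ) < q} := iq.2
      rw [hb _ hmem]
      simp only [v]
      rw [dif_pos (show ((Fin.castLE hq iq : Fin (r * p)) : ℕ) < q from iq.2)]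
      exact congrArg (G x) (Fin.ext rfl)
    have hconjU : U0 * Aq0 * U0ᴴ = M := by
      ext x y
      have hL : (U0 * Aq0 * U0ᴴ) x y = ∑ j : Fin (r * p), ∑ i : Fin (r * p),
          (b i x) * (if hh : (i : ℕ) < q ∧ (j : ℕ) < q
            then A ⟨i, hh.1⟩ ⟨j, hh.2⟩ else 0) * (starRingEnd ℂ) (b j y) := by
        simp only [Matrix.mul_apply, Matrix.conjTranspose_apply, hU0def, hAq0,
          Matrix.of_apply, Finset.sum_mul, RCLike.star_def]
      rw [hL, sum2_dite hq (fun iq jq => A iq jq) (fun i => b i x)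
        (fun j => (starRingEnd ℂ) (b j y))]
      rw [hMdef]
      simp only [Matrix.mul_apply, Matrix.conjTranspose_apply, Finset.sum_mul]
      apply Finset.sum_congr rfl
      intro jq _
      apply Finset.sum_congr rfl
      intro iq _
      rw [hbv, hbv, RCLike.star_def]
    rw [← hconjU]
    exact hNconj U0 Aq0 hU0
  -- the unitaries
  set ζ : ℂ := Complex.exp (2 * Real.pi * Complex.I / r) with hζdef
  set d : Fin r → Fin (r * p) → ℂ := fun t i => ζ ^ ((t : ℕ) * (((e.symm i).1 : ℕ))) with hddef
  set σ : Fin r → (Fin (r * p) ≃ Fin (r * p)) := fun k =>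
    e.symm.trans ((Equiv.prodCongr (Equiv.addLeft k) (Equiv.refl (Fin p))).trans e) with hσdef
  set W : Fin r → Fin r → Matrix (Fin (r * p)) (Fin (r * p)) ℂ := fun t k =>
    (Matrix.diagonal (d t)).submatrix (σ k).symm id with hWdef
  have hWmem : ∀ t k, W t k ∈ Matrix.unitaryGroup (Fin (r * p)) ℂ := by
    intro t k
    rw [Matrix.mem_unitaryGroup_iff', Matrix.star_eq_conjTranspose, hWdef,
      Matrix.conjTranspose_submatrix, Matrix.submatrix_mul_equiv,
      Matrix.diagonal_conjTranspose, Matrix.diagonal_mul_diagonal, Matrix.submatrix_id_id]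
    have h1 : (fun i => star (d t) i * d t i) = fun _ => (1 : ℂ) := by
      funext i
      simp only [Pi.star_apply, hddef, hζdef]
      rw [RCLike.star_def, map_pow, ← mul_pow, conj_zeta_mul, one_pow]
    rw [h1, Matrix.diagonal_one]
  have hsymmσ : ∀ (k : Fin r) (i : Fin (r * p)),
      e.symm ((σ k).symm i) = (-k + (e.symm i).1, (e.symm i).2) := by
    intro k i
    simp [hσdef, Equiv.symm_trans_apply, Equiv.prodCongr_symm, Equiv.prodCongr_apply,
      Equiv.addLeft_symm, Equiv.coe_addLeft, Prod.map]
  have hWentry : ∀ (t k : Fin r) (i i' : Fin (r * p)),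
      (W t k * M * (W t k)ᴴ) i i'
      = (d t ((σ k).symm i) * (starRingEnd ℂ) (d t ((σ k).symm i')))
          * M ((σ k).symm i) ((σ k).symm i') := by
    intro t k i i'
    simp only [hWdef, Matrix.mul_apply, Matrix.conjTranspose_apply, Matrix.submatrix_apply,
      Matrix.diagonal_apply, id_eq, ite_mul, zero_mul, Finset.sum_ite_eq, Finset.mem_univ,
      if_true, mul_ite, mul_zero]
    simp only [apply_ite (star : ℂ → ℂ), star_zero, mul_ite, mul_zero, Finset.sum_ite_eq,
      Finset.mem_univ, if_true, RCLike.star_def]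
    ring
  have hbig : ∑ t : Fin r, ∑ k : Fin r, W t k * M * (W t k)ᴴ
      = (r : ℂ) • (Matrix.reindex e e
          (Matrix.kroneckerMap (· * ·) (1 : Matrix (Fin r) (Fin r) ℂ) B)) := by
    ext i i'
    simp only [Matrix.sum_apply]
    rw [Finset.sum_comm]
    have h1 : ∀ k : Fin r, ∑ t : Fin r, (W t k * M * (W t k)ᴴ) i i'
        = (if (e.symm i).1 = (e.symm i').1 then (r : ℂ) else 0)
            * M ((σ k).symm i) ((σ k).symm i') := by
      intro k
      rw [Finset.sum_congr rfl (fun t _ => hWentry t k i i'), ← Finset.sum_mul]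
      congr 1
      have hd1 : ∀ t : Fin r, d t ((σ k).symm i)
          = ζ ^ ((t : ℕ) * (((-k + (e.symm i).1 : Fin r) : ℕ))) := by
        intro t
        simp only [hddef, hsymmσ]
      have hd2 : ∀ t : Fin r, d t ((σ k).symm i')
          = ζ ^ ((t : ℕ) * (((-k + (e.symm i').1 : Fin r) : ℕ))) := by
        intro t
        simp only [hddef, hsymmσ]
      rw [Finset.sum_congr rfl (fun t _ => by rw [hd1 t, hd2 t]), hζdef,
        root_sum hr (-k + (e.symm i).1) (-k + (e.symm i').1)]
      simp only [add_right_inj]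
    rw [Finset.sum_congr rfl (fun k _ => h1 k), ← Finset.mul_sum]
    rw [Matrix.smul_apply, Matrix.reindex_apply, Matrix.submatrix_apply,
      Matrix.kroneckerMap_apply, Matrix.one_apply]
    by_cases hlm : (e.symm i).1 = (e.symm i').1
    · rw [if_pos hlm, if_pos hlm]
      have h2 : ∀ k : Fin r, M ((σ k).symm i) ((σ k).symm i')
          = (F ((e.symm i).1 - k) * A * (F ((e.symm i).1 - k))ᴴ)
              (e.symm i).2 (e.symm i').2 := by
        intro k
        rw [hM, hsymmσ, hsymmσ, ← hlm, neg_add_eq_sub]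
      rw [Finset.sum_congr rfl (fun k _ => h2 k)]
      have h4 : ∑ k : Fin r, (F ((e.symm i).1 - k) * A * (F ((e.symm i).1 - k))ᴴ)
          (e.symm i).2 (e.symm i').2 = B (e.symm i).2 (e.symm i').2 := by
        rw [hB, Matrix.sum_apply]
        refine Fintype.sum_equiv (Equiv.subLeft (e.symm i).1) _ _ (fun k => ?_)
        rw [Equiv.subLeft_apply]
      rw [h4, smul_eq_mul, one_mul]
    · rw [if_neg hlm, if_neg hlm]
      simp
  -- final assembly
  have hrC : ((r : ℂ)) ≠ 0 := Nat.cast_ne_zero.mpr hr.ne'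
  have hfinal : N (Matrix.reindex e e
      (Matrix.kroneckerMap (· * ·) (1 : Matrix (Fin r) (Fin r) ℂ) B))
      ≤ (r : ℝ) * N Aq0 := by
    have h1 : (Matrix.reindex e e
        (Matrix.kroneckerMap (· * ·) (1 : Matrix (Fin r) (Fin r) ℂ) B))
        = (r : ℂ)⁻¹ • (∑ t : Fin r, ∑ k : Fin r, W t k * M * (W t k)ᴴ) := by
      rw [hbig, smul_smul, inv_mul_cancel₀ hrC, one_smul]
    rw [h1, hN_smul]
    have h2 : N (∑ t : Fin r, ∑ k : Fin r, W t k * M * (W t k)ᴴ)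
        ≤ (r : ℝ) * ((r : ℝ) * N M) := by
      refine le_trans (hNsum _ _) ?_
      have h3 : ∀ t : Fin r, N (∑ k : Fin r, W t k * M * (W t k)ᴴ) ≤ (r : ℝ) * N M := by
        intro t
        refine le_trans (hNsum _ _) ?_
        have : ∀ k : Fin r, N (W t k * M * (W t k)ᴴ) = N M := fun k => hNconj _ _ (hWmem t k)
        rw [Finset.sum_congr rfl (fun k _ => this k)]
        simp [Finset.sum_const, Finset.card_univ, nsmul_eq_mul]
      refine le_trans (Finset.sum_le_sum (fun t _ => h3 t)) ?_
      exact le_of_eq (by simp [Finset.sum_const, Finset.card_univ, nsmul_eq_mul, mul_assoc])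
    have habs : ‖((r : ℂ)⁻¹)‖ = (r : ℝ)⁻¹ := by
      rw [norm_inv, Complex.norm_natCast]
    rw [habs]
    have hrR : ((r : ℝ)) ≠ 0 := Nat.cast_ne_zero.mpr hr.ne'
    have h4 := mul_le_mul_of_nonneg_left h2 (by positivity : (0:ℝ) ≤ ((r : ℝ))⁻¹)
    have heq : ((r : ℝ))⁻¹ * (((r : ℝ)) * (((r : ℝ)) * N M)) = ((r : ℝ)) * N Aq0 := by
      rw [← hMA]
      field_simp
    exact le_trans h4 (le_of_eq heq)
  exact hfinal
end

section
/- Let R_i = U_i D_i V_i^t ∈ M_{q,p} with rank k_i, where D_i ∈ M_{k_i} is diagonal with positive entries and U_i, V_i have orthonormal columns; let S_i = R_i^t. Suppose F_1,...,F_r ∈ M_{p,q} with Σ_j F_j*F_j = I_q satisfy Σ_j F_j R_u R_v* F_j* = S_u S_v* for all 1 ≤ u,v ≤ n. Then there exist k_i × p matrices W_{i1},...,W_{ir} such that F_ℓ R_i = V_i D_i W_{iℓ} for all ℓ, i, and [W_{i1} ⋯ W_{ir}][W_{j1} ⋯ W_{jr}]* = U_i^t conj(U_j) for all i, j. -/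
open Matrix

private lemma sum_mul_conjTranspose_eq_zero' {m N ι : Type*} [Fintype m] [Fintype N] [Fintype ι]
    (A : ι → Matrix m N ℂ) (h : ∑ ℓ, A ℓ * (A ℓ)ᴴ = 0) (ℓ : ι) : A ℓ = 0 := by
  ext x y
  have h1 : ∑ ℓ' : ι, ∑ j, Complex.normSq (A ℓ' x j) = 0 := by
    have h0 := congrFun (congrFun h x) x
    simp only [Matrix.sum_apply, Matrix.mul_apply, Matrix.conjTranspose_apply,
      Matrix.zero_apply, Complex.star_def, Complex.mul_conj] at h0
    exact_mod_cast h0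
  have h2 := (Finset.sum_eq_zero_iff_of_nonneg
    (fun ℓ' _ => Finset.sum_nonneg fun j _ => Complex.normSq_nonneg _)).mp h1 ℓ
    (Finset.mem_univ _)
  have h3 := (Finset.sum_eq_zero_iff_of_nonneg
    (fun j _ => Complex.normSq_nonneg _)).mp h2 y (Finset.mem_univ _)
  simpa using Complex.normSq_eq_zero.mp h3

private lemma matrix_cancel {a b c : Type*} [Fintype a] [Fintype b] [Fintype c] [DecidableEq a]
    (A : Matrix a b ℂ) (B : Matrix b a ℂ) (h : A * B = 1) (X : Matrix a c ℂ) :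
    A * (B * X) = X := by
  rw [← Matrix.mul_assoc, h, Matrix.one_mul]

/-- Theorem 3.1 (b) ⇒ (c): if `R_i = U_i D_i V_iᵗ` is an SVD and
`S_i = R_iᵗ`, and Kraus operators `F_ℓ` satisfy `∑_ℓ F_ℓ R_u R_v* F_ℓᴴ = S_u S_v*`,
then there exist matrices `W_{iℓ}` with `F_ℓ R_i = V_i D_i W_{iℓ}` and
`∑_ℓ W_{iℓ} W_{jℓ}ᴴ = U_iᵗ conj(U_j)`. -/
theorem exists_W_of_channel {n p q r : ℕ} (k : Fin n → ℕ)
    (U : (i : Fin n) → Matrix (Fin q) (Fin (k i)) ℂ)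
    (V : (i : Fin n) → Matrix (Fin p) (Fin (k i)) ℂ)
    (d : (i : Fin n) → Fin (k i) → ℝ)
    (hd : ∀ i a, 0 < d i a)
    (hU : ∀ i, (U i)ᴴ * U i = 1)
    (hV : ∀ i, (V i)ᴴ * V i = 1)
    (R : Fin n → Matrix (Fin q) (Fin p) ℂ)
    (hR : ∀ i, R i = U i * Matrix.diagonal (fun a => ((d i a : ℝ) : ℂ)) * (V i)ᵀ)
    (S : Fin n → Matrix (Fin p) (Fin q) ℂ)
    (hS : ∀ i, S i = (R i)ᵀ)
    (F : Fin r → Matrix (Fin p) (Fin q) ℂ)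
    (hF : ∑ ℓ, (F ℓ)ᴴ * F ℓ = 1)
    (hmap : ∀ u v : Fin n, ∑ ℓ, F ℓ * (R u * (R v)ᴴ) * (F ℓ)ᴴ = S u * (S v)ᴴ) :
    ∃ W : (i : Fin n) → Fin r → Matrix (Fin (k i)) (Fin p) ℂ,
      (∀ (ℓ : Fin r) (i : Fin n),
        F ℓ * R i = V i * Matrix.diagonal (fun a => ((d i a : ℝ) : ℂ)) * W i ℓ) ∧
      (∀ i j : Fin n,
        ∑ ℓ, W i ℓ * (W j ℓ)ᴴ = (U i)ᵀ * (U j).map (starRingEnd ℂ)) := by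
  classical
  set D : (i : Fin n) → Matrix (Fin (k i)) (Fin (k i)) ℂ :=
    fun i => Matrix.diagonal (fun a => ((d i a : ℝ) : ℂ)) with hDdef
  set E : (i : Fin n) → Matrix (Fin (k i)) (Fin (k i)) ℂ :=
    fun i => Matrix.diagonal (fun a => (((d i a)⁻¹ : ℝ) : ℂ)) with hEdef
  have hmul : ∀ i a, ((d i a : ℝ) : ℂ) * (((d i a)⁻¹ : ℝ) : ℂ) = 1 := fun i a => by
    rw [← Complex.ofReal_mul, mul_inv_cancel₀ (hd i a).ne', Complex.ofReal_one]
  have hmul' : ∀ i a, (((d i a)⁻¹ : ℝ) : ℂ) * ((d i a : ℝ) : ℂ) = 1 := fun i a => by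
    rw [← Complex.ofReal_mul, inv_mul_cancel₀ (hd i a).ne', Complex.ofReal_one]
  have hDE : ∀ i, D i * E i = 1 := fun i => by
    rw [hDdef, hEdef]; simp only [Matrix.diagonal_mul_diagonal, hmul i, Matrix.diagonal_one]
  have hED : ∀ i, E i * D i = 1 := fun i => by
    rw [hDdef, hEdef]; simp only [Matrix.diagonal_mul_diagonal, hmul' i, Matrix.diagonal_one]
  have hEH : ∀ i, (E i)ᴴ = E i := by
    intro i
    rw [hEdef]
    simp [Matrix.diagonal_conjTranspose, Pi.star_def, Complex.conj_ofReal]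
  have hDH : ∀ i, (D i)ᴴ = D i := by
    intro i
    rw [hDdef]
    simp [Matrix.diagonal_conjTranspose, Pi.star_def, Complex.conj_ofReal]
  have hS' : ∀ i, S i = V i * D i * (U i)ᵀ := by
    intro i
    rw [hS, hR, hDdef]
    simp [Matrix.transpose_mul, Matrix.diagonal_transpose, Matrix.mul_assoc]
  -- key: (1 - V V^H) F_ℓ R_i = 0
  have key : ∀ i ℓ, (1 - V i * (V i)ᴴ) * (F ℓ * R i) = 0 := by
    intro i
    set P : Matrix (Fin p) (Fin p) ℂ := 1 - V i * (V i)ᴴ with hP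
    have hPH : Pᴴ = P := by
      rw [hP]
      simp [Matrix.conjTranspose_sub, Matrix.conjTranspose_mul]
    have hPS : P * S i = 0 := by
      rw [hS' i, hP, Matrix.sub_mul, Matrix.one_mul]
      rw [Matrix.mul_assoc (V i) ((V i)ᴴ), Matrix.mul_assoc (V i) (D i)]
      rw [matrix_cancel (V i)ᴴ (V i) (hV i)]
      rw [← Matrix.mul_assoc, sub_self]
    have hsum : ∑ ℓ, (P * (F ℓ * R i)) * (P * (F ℓ * R i))ᴴ = 0 := by
      have e1 : ∀ ℓ, (P * (F ℓ * R i)) * (P * (F ℓ * R i))ᴴ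
          = P * ((F ℓ * (R i * (R i)ᴴ) * (F ℓ)ᴴ) * Pᴴ) := by
        intro ℓ
        simp only [Matrix.conjTranspose_mul, Matrix.mul_assoc]
      calc ∑ ℓ, (P * (F ℓ * R i)) * (P * (F ℓ * R i))ᴴ
          = ∑ ℓ, P * ((F ℓ * (R i * (R i)ᴴ) * (F ℓ)ᴴ) * Pᴴ) :=
            Finset.sum_congr rfl fun ℓ _ => e1 ℓ
        _ = P * ((∑ ℓ, F ℓ * (R i * (R i)ᴴ) * (F ℓ)ᴴ) * Pᴴ) := by
            rw [← Finset.mul_sum, ← Finset.sum_mul]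
        _ = P * ((S i * (S i)ᴴ) * P) := by rw [hmap i i, hPH]
        _ = (P * S i) * ((S i)ᴴ * P) := by simp only [Matrix.mul_assoc]
        _ = 0 := by rw [hPS, Matrix.zero_mul]
    intro ℓ
    exact sum_mul_conjTranspose_eq_zero' (fun ℓ => P * (F ℓ * R i)) hsum ℓ
  have hkey' : ∀ i ℓ, V i * ((V i)ᴴ * (F ℓ * R i)) = F ℓ * R i := by
    intro i ℓ
    have h0 := key i ℓ
    rw [Matrix.sub_mul, Matrix.one_mul, sub_eq_zero] at h0
    rw [← Matrix.mul_assoc, ← h0]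
  refine ⟨fun i ℓ => E i * ((V i)ᴴ * (F ℓ * R i)), ?_, ?_⟩
  · intro ℓ i
    calc F ℓ * R i = V i * ((V i)ᴴ * (F ℓ * R i)) := (hkey' i ℓ).symm
      _ = V i * (D i * (E i * ((V i)ᴴ * (F ℓ * R i)))) := by
          rw [matrix_cancel (D i) (E i) (hDE i)]
      _ = V i * D i * (E i * ((V i)ᴴ * (F ℓ * R i))) := by rw [Matrix.mul_assoc]
  · intro i j
    have hUt : ((U j)ᵀ)ᴴ = (U j).map (starRingEnd ℂ) := by
      ext a b
      simp [Matrix.conjTranspose_apply, Matrix.transpose_apply, Matrix.map_apply]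
    have e1 : ∀ ℓ, (E i * ((V i)ᴴ * (F ℓ * R i))) * (E j * ((V j)ᴴ * (F ℓ * R j)))ᴴ
        = E i * ((V i)ᴴ * ((F ℓ * (R i * (R j)ᴴ) * (F ℓ)ᴴ) * (V j * E j))) := by
      intro ℓ
      simp only [Matrix.conjTranspose_mul, hEH, Matrix.conjTranspose_conjTranspose,
        Matrix.mul_assoc]
    calc ∑ ℓ, (E i * ((V i)ᴴ * (F ℓ * R i))) * (E j * ((V j)ᴴ * (F ℓ * R j)))ᴴ
        = ∑ ℓ, E i * ((V i)ᴴ * ((F ℓ * (R i * (R j)ᴴ) * (F ℓ)ᴴ) * (V j * E j))) :=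
          Finset.sum_congr rfl fun ℓ _ => e1 ℓ
      _ = E i * ((V i)ᴴ * ((∑ ℓ, F ℓ * (R i * (R j)ᴴ) * (F ℓ)ᴴ) * (V j * E j))) := by
          simp only [Matrix.sum_mul, Matrix.mul_sum]
      _ = E i * ((V i)ᴴ * ((S i * (S j)ᴴ) * (V j * E j))) := by rw [hmap i j]
      _ = (U i)ᵀ * (U j).map (starRingEnd ℂ) := by
          rw [hS' i, hS' j]
          simp only [Matrix.conjTranspose_mul, hDH, hUt, Matrix.mul_assoc]
          rw [matrix_cancel (V j)ᴴ (V j) (hV j) (E j), hDE j, Matrix.mul_one,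
            matrix_cancel (V i)ᴴ (V i) (hV i), matrix_cancel (E i) (D i) (hED i)]
end

section
/- Conversely, suppose there exist F_1,...,F_r ∈ M_{p,q} with Σ_j F_j*F_j = I_q and k_i × p matrices W_{iℓ} with F_ℓ R_i = V_i D_i W_{iℓ} for all ℓ,i and [W_{i1} ⋯ W_{ir}][W_{j1} ⋯ W_{jr}]* = U_i^t conj(U_j) for all i,j, where R_i = U_i D_i V_i^t is an SVD and S_i = R_i^t. Then Σ_{ℓ=1}^r F_ℓ R_i R_j* F_ℓ* = S_i S_j* for all i,j. -/
open Matrix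

/-- Theorem 3.1 (c) ⇒ (b): if `R_i = U_i D_i V_iᵗ` is an SVD, `S_i = R_iᵗ`,
and there are Kraus operators `F_ℓ` (with `∑ F_ℓᴴ F_ℓ = 1`) and matrices `W_{iℓ}` with
`F_ℓ R_i = V_i D_i W_{iℓ}` and `∑_ℓ W_{iℓ} W_{jℓ}ᴴ = U_iᵗ conj(U_j)`, then
`∑_ℓ F_ℓ R_i R_jᴴ F_ℓᴴ = S_i S_jᴴ` for all `i, j`. -/
theorem channel_of_W {n p q r : ℕ} (k : Fin n → ℕ)
    (U : (i : Fin n) → Matrix (Fin q) (Fin (k i)) ℂ)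
    (V : (i : Fin n) → Matrix (Fin p) (Fin (k i)) ℂ)
    (d : (i : Fin n) → Fin (k i) → ℝ)
    (hd : ∀ i a, 0 < d i a)
    (hU : ∀ i, (U i)ᴴ * U i = 1)
    (hV : ∀ i, (V i)ᴴ * V i = 1)
    (R : Fin n → Matrix (Fin q) (Fin p) ℂ)
    (hR : ∀ i, R i = U i * Matrix.diagonal (fun a => ((d i a : ℝ) : ℂ)) * (V i)ᵀ)
    (S : Fin n → Matrix (Fin p) (Fin q) ℂ)
    (hS : ∀ i, S i = (R i)ᵀ)
    (F : Fin r → Matrix (Fin p) (Fin q) ℂ)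
    (hF : ∑ ℓ, (F ℓ)ᴴ * F ℓ = 1)
    (W : (i : Fin n) → Fin r → Matrix (Fin (k i)) (Fin p) ℂ)
    (hW1 : ∀ (ℓ : Fin r) (i : Fin n),
      F ℓ * R i = V i * Matrix.diagonal (fun a => ((d i a : ℝ) : ℂ)) * W i ℓ)
    (hW2 : ∀ i j : Fin n,
      ∑ ℓ, W i ℓ * (W j ℓ)ᴴ = (U i)ᵀ * (U j).map (starRingEnd ℂ)) :
    ∀ i j : Fin n, ∑ ℓ, F ℓ * (R i * (R j)ᴴ) * (F ℓ)ᴴ = S i * (S j)ᴴ := by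
  intro i j
  have hD : ∀ m, (Matrix.diagonal (fun a => ((d m a : ℝ) : ℂ)))ᴴ
      = Matrix.diagonal (fun a => ((d m a : ℝ) : ℂ)) := by
    intro m
    ext a b
    by_cases h : a = b <;>
      simp [Matrix.conjTranspose_apply, Matrix.diagonal_apply, h, eq_comm]
  have htc : ∀ {m l : ℕ} (A : Matrix (Fin m) (Fin l) ℂ),
      (Aᵀ)ᴴ = A.map (starRingEnd ℂ) := by
    intro m l A; ext a b; simp [Matrix.conjTranspose_apply]
  have hmapV : ∀ m : Fin n, ((V m)ᵀ).map (starRingEnd ℂ) = (V m)ᴴ := by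
    intro m; ext a b; simp [Matrix.conjTranspose_apply]
  have hmapD : ∀ m : Fin n,
      (Matrix.diagonal (fun a => ((d m a : ℝ) : ℂ))).map (starRingEnd ℂ)
        = Matrix.diagonal (fun a => ((d m a : ℝ) : ℂ)) := by
    intro m
    ext a b
    by_cases h : a = b <;> simp [Matrix.diagonal_apply, h]
  calc ∑ ℓ, F ℓ * (R i * (R j)ᴴ) * (F ℓ)ᴴ
      = ∑ ℓ, (F ℓ * R i) * (F ℓ * R j)ᴴ := by
        refine Finset.sum_congr rfl fun ℓ _ => ?_
        simp only [conjTranspose_mul, Matrix.mul_assoc]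
    _ = V i * (Matrix.diagonal (fun a => ((d i a : ℝ) : ℂ)) *
         ((∑ ℓ, W i ℓ * (W j ℓ)ᴴ) *
         (Matrix.diagonal (fun a => ((d j a : ℝ) : ℂ)) * (V j)ᴴ))) := by
        simp only [Matrix.mul_sum, Matrix.sum_mul]
        refine Finset.sum_congr rfl fun ℓ _ => ?_
        rw [hW1, hW1]
        simp only [conjTranspose_mul, hD, Matrix.mul_assoc]
    _ = S i * (S j)ᴴ := by
        rw [hW2, hS, hS, hR, hR]
        simp only [Matrix.transpose_mul, Matrix.transpose_transpose,
          Matrix.diagonal_transpose, Matrix.conjTranspose_mul, htc, hD, Matrix.map_mul, hmapV, hmapD,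
          Matrix.mul_assoc]
end

section
/- Let U_{ABE} = I_A ⊗ U_{BE} be a unitary on H_A ⊗ H_B ⊗ H_E with dim H_A = dim H_B = n, let |ψ_M⟩ = Σ_{i=1}^n |ii⟩ ∈ H_A⊗H_B be the (unnormalized) maximally entangled state, and let ρ = P(U_{ABE}|ψ_M⟩|0⟩_E). Suppose there is a TPCP map T of the form T(X) = Σ_j (I_A⊗F_j) X (I_A⊗F_j)* (F_j: H_E → H_B, Σ F_j*F_j = I_E) with T(tr_B ρ) = tr_E ρ. Then for every vector |ψ⟩ ∈ H_A⊗H_B, letting σ = P(U_{ABE}|ψ⟩|0⟩_E), the same map satisfies T(tr_B σ) = tr_E σ. -/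
open Matrix

/-- The purified output vector `U_{ABE}|ψ⟩|0⟩_E`, where `U_{ABE} = I_A ⊗ U_{BE}`. -/
noncomputable def purify {n e : ℕ} [NeZero e]
    (U : Matrix (Fin n × Fin e) (Fin n × Fin e) ℂ) (ψ : Fin n × Fin n → ℂ) :
    Fin n × Fin n × Fin e → ℂ :=
  fun a => ∑ b : Fin n × Fin e, U a.2 b * (ψ (a.1, b.1) * (if b.2 = (0 : Fin e) then (1 : ℂ) else 0))

/-- Partial trace over `B` of the rank-one projection onto `φ`. -/
noncomputable def trB {n e : ℕ} (φ : Fin n × Fin n × Fin e → ℂ) :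
    Matrix (Fin n × Fin e) (Fin n × Fin e) ℂ :=
  Matrix.of fun a b => ∑ j : Fin n, φ (a.1, j, a.2) * star (φ (b.1, j, b.2))

/-- Partial trace over `E` of the rank-one projection onto `φ`. -/
noncomputable def trE {n e : ℕ} (φ : Fin n × Fin n × Fin e → ℂ) :
    Matrix (Fin n × Fin n) (Fin n × Fin n) ℂ :=
  Matrix.of fun a b => ∑ k : Fin e, φ (a.1, a.2, k) * star (φ (b.1, b.2, k))

/-- The map `T(X) = ∑ ℓ (I_A ⊗ F_ℓ) X (I_A ⊗ F_ℓ)ᴴ` with `F_ℓ : H_E → H_B`. -/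
noncomputable def applyT {n e r : ℕ} (F : Fin r → Matrix (Fin n) (Fin e) ℂ)
    (X : Matrix (Fin n × Fin e) (Fin n × Fin e) ℂ) :
    Matrix (Fin n × Fin n) (Fin n × Fin n) ℂ :=
  ∑ ℓ, (Matrix.kroneckerMap (· * ·) (1 : Matrix (Fin n) (Fin n) ℂ) (F ℓ)) * X *
    (Matrix.kroneckerMap (· * ·) (1 : Matrix (Fin n) (Fin n) ℂ) (F ℓ))ᴴ

/-- The (unnormalized) maximally entangled state `∑ i |ii⟩`. -/
def psiM {n : ℕ} : Fin n × Fin n → ℂ := fun a => if a.1 = a.2 then 1 else 0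

/-- Every vector is `(K_A ⊗ I)|ψ_M⟩` pushed through the channel: the purification of `ψ`
expands linearly in terms of purifications of the maximally entangled state. -/
lemma purify_expand {n e : ℕ} [NeZero e]
    (U : Matrix (Fin n × Fin e) (Fin n × Fin e) ℂ) (ψ : Fin n × Fin n → ℂ)
    (a : Fin n × Fin n × Fin e) :
    purify U ψ a = ∑ j : Fin n, ψ (a.1, j) * purify U psiM (j, a.2) := by
  simp only [purify, psiM, Finset.mul_sum, mul_ite, mul_one, mul_zero]
  rw [Finset.sum_comm]
  refine Finset.sum_congr rfl fun b _ => ?_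
  simp [Finset.sum_ite_eq', mul_comm]

lemma trB_conj {n e : ℕ} [NeZero e]
    (U : Matrix (Fin n × Fin e) (Fin n × Fin e) ℂ) (ψ : Fin n × Fin n → ℂ) :
    trB (purify U ψ) =
      (Matrix.kroneckerMap (· * ·) (Matrix.of fun i j => ψ (i, j)) (1 : Matrix (Fin e) (Fin e) ℂ)) *
        trB (purify U psiM) *
      (Matrix.kroneckerMap (· * ·) (Matrix.of fun i j => ψ (i, j)) (1 : Matrix (Fin e) (Fin e) ℂ))ᴴ := by
  ext a b
  simp only [mul_apply, conjTranspose_apply, kroneckerMap_apply, one_apply, of_apply,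
    Fintype.sum_prod_type, mul_ite, mul_zero, mul_one, ite_mul, zero_mul,
    Finset.sum_ite_eq, Finset.sum_ite_eq', Finset.mem_univ, if_true,
    apply_ite (star : ℂ → ℂ), star_zero, star_mul']
  have h : ∀ (x : Fin n × Fin n × Fin e), purify U ψ x = ∑ j, ψ (x.1, j) * purify U psiM (j, x.2) :=
    purify_expand U ψ
  simp only [trB, of_apply, h, star_sum, star_mul', Finset.sum_mul, Finset.mul_sum]
  rw [Finset.sum_comm]
  refine Finset.sum_congr rfl fun q _ => ?_
  conv_lhs => rw [Finset.sum_comm]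
  refine Finset.sum_congr rfl fun p _ => ?_
  refine Finset.sum_congr rfl fun j _ => by ring

lemma trE_conj {n e : ℕ} [NeZero e]
    (U : Matrix (Fin n × Fin e) (Fin n × Fin e) ℂ) (ψ : Fin n × Fin n → ℂ) :
    trE (purify U ψ) =
      (Matrix.kroneckerMap (· * ·) (Matrix.of fun i j => ψ (i, j)) (1 : Matrix (Fin n) (Fin n) ℂ)) *
        trE (purify U psiM) *
      (Matrix.kroneckerMap (· * ·) (Matrix.of fun i j => ψ (i, j)) (1 : Matrix (Fin n) (Fin n) ℂ))ᴴ := by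
  ext a b
  simp only [mul_apply, conjTranspose_apply, kroneckerMap_apply, one_apply, of_apply,
    Fintype.sum_prod_type, mul_ite, mul_zero, mul_one, ite_mul, zero_mul,
    Finset.sum_ite_eq, Finset.sum_ite_eq', Finset.mem_univ, if_true,
    apply_ite (star : ℂ → ℂ), star_zero, star_mul']
  have h : ∀ (x : Fin n × Fin n × Fin e), purify U ψ x = ∑ j, ψ (x.1, j) * purify U psiM (j, x.2) :=
    purify_expand U ψ
  simp only [trE, of_apply, h, star_sum, star_mul', Finset.sum_mul, Finset.mul_sum]
  rw [Finset.sum_comm]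
  refine Finset.sum_congr rfl fun q _ => ?_
  conv_lhs => rw [Finset.sum_comm]
  refine Finset.sum_congr rfl fun p _ => ?_
  refine Finset.sum_congr rfl fun j _ => by ring

lemma kron_conjTranspose {l m p q : Type*} (A : Matrix l m ℂ) (B : Matrix p q ℂ) :
    (Matrix.kroneckerMap (· * ·) A B)ᴴ = Matrix.kroneckerMap (· * ·) Aᴴ Bᴴ := by
  ext a b
  simp [conjTranspose_apply, kroneckerMap_apply, star_mul', mul_comm]

/-- `T = I_A ⊗ (·)` commutes with conjugation by `K ⊗ I`. -/
lemma conj_applyT {n e r : ℕ} (F : Fin r → Matrix (Fin n) (Fin e) ℂ)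
    (K : Matrix (Fin n) (Fin n) ℂ) (X : Matrix (Fin n × Fin e) (Fin n × Fin e) ℂ) :
    applyT F ((Matrix.kroneckerMap (· * ·) K (1 : Matrix (Fin e) (Fin e) ℂ)) * X *
        (Matrix.kroneckerMap (· * ·) K (1 : Matrix (Fin e) (Fin e) ℂ))ᴴ) =
      (Matrix.kroneckerMap (· * ·) K (1 : Matrix (Fin n) (Fin n) ℂ)) * applyT F X *
        (Matrix.kroneckerMap (· * ·) K (1 : Matrix (Fin n) (Fin n) ℂ))ᴴ := by
  simp only [applyT, Finset.mul_sum, Finset.sum_mul]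
  refine Finset.sum_congr rfl fun ℓ _ => ?_
  have h1 : (Matrix.kroneckerMap (· * ·) (1 : Matrix (Fin n) (Fin n) ℂ) (F ℓ)) *
      (Matrix.kroneckerMap (· * ·) K (1 : Matrix (Fin e) (Fin e) ℂ)) =
      (Matrix.kroneckerMap (· * ·) K (1 : Matrix (Fin n) (Fin n) ℂ)) *
      (Matrix.kroneckerMap (· * ·) (1 : Matrix (Fin n) (Fin n) ℂ) (F ℓ)) := by
    rw [← Matrix.mul_kronecker_mul, ← Matrix.mul_kronecker_mul]
    simp
  calc (Matrix.kroneckerMap (· * ·) (1 : Matrix (Fin n) (Fin n) ℂ) (F ℓ)) *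
        ((Matrix.kroneckerMap (· * ·) K (1 : Matrix (Fin e) (Fin e) ℂ)) * X *
          (Matrix.kroneckerMap (· * ·) K (1 : Matrix (Fin e) (Fin e) ℂ))ᴴ) *
        (Matrix.kroneckerMap (· * ·) (1 : Matrix (Fin n) (Fin n) ℂ) (F ℓ))ᴴ
      = ((Matrix.kroneckerMap (· * ·) (1 : Matrix (Fin n) (Fin n) ℂ) (F ℓ)) *
          (Matrix.kroneckerMap (· * ·) K (1 : Matrix (Fin e) (Fin e) ℂ))) * X *
        ((Matrix.kroneckerMap (· * ·) (1 : Matrix (Fin n) (Fin n) ℂ) (F ℓ)) *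
          (Matrix.kroneckerMap (· * ·) K (1 : Matrix (Fin e) (Fin e) ℂ)))ᴴ := by
        simp only [conjTranspose_mul, Matrix.mul_assoc]
    _ = ((Matrix.kroneckerMap (· * ·) K (1 : Matrix (Fin n) (Fin n) ℂ)) *
          (Matrix.kroneckerMap (· * ·) (1 : Matrix (Fin n) (Fin n) ℂ) (F ℓ))) * X *
        ((Matrix.kroneckerMap (· * ·) K (1 : Matrix (Fin n) (Fin n) ℂ)) *
          (Matrix.kroneckerMap (· * ·) (1 : Matrix (Fin n) (Fin n) ℂ) (F ℓ)))ᴴ := by rw [h1]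
    _ = (Matrix.kroneckerMap (· * ·) K (1 : Matrix (Fin n) (Fin n) ℂ)) *
        ((Matrix.kroneckerMap (· * ·) (1 : Matrix (Fin n) (Fin n) ℂ) (F ℓ)) * X *
          (Matrix.kroneckerMap (· * ·) (1 : Matrix (Fin n) (Fin n) ℂ) (F ℓ))ᴴ) *
        (Matrix.kroneckerMap (· * ·) K (1 : Matrix (Fin n) (Fin n) ℂ))ᴴ := by
        simp only [conjTranspose_mul, Matrix.mul_assoc]

/-- Theorem 5.1: if `T` degrades `E` to `B` for the channel output of the
maximally entangled state, then the same `T` works for the output of every input state. -/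
theorem degradable_of_maxEntangled {n e r : ℕ} [NeZero e]
    (U : Matrix (Fin n × Fin e) (Fin n × Fin e) ℂ)
    (hU : U ∈ Matrix.unitaryGroup (Fin n × Fin e) ℂ)
    (F : Fin r → Matrix (Fin n) (Fin e) ℂ)
    (hF : ∑ ℓ, (F ℓ)ᴴ * F ℓ = 1)
    (hT : applyT F (trB (purify U psiM)) = trE (purify U psiM)) :
    ∀ ψ : Fin n × Fin n → ℂ,
      applyT F (trB (purify U ψ)) = trE (purify U ψ) := by
  intro ψ
  rw [trB_conj, trE_conj, conj_applyT, hT]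
end

section
/- With the setup of the previous theorem (U_{ABE} = I_A ⊗ U_{BE}, dim H_A = dim H_B = n, |ψ_M⟩ = Σ_i |ii⟩): if the output state U_{ABE}|ψ_M⟩|0⟩_E is NOT E→B degradable (no TPCP map T of the form Σ_j (I_A⊗F_j)(·)(I_A⊗F_j)* sends tr_B of its projection to tr_E of its projection), then for every invertible operator W_A on H_A and |ψ⟩ = (W_A⊗I_B)|ψ_M⟩, the output state U_{ABE}|ψ⟩|0⟩_E is also not E→B degradable. -/
open Matrix


open Matrix

/-- A tripartite pure state vector `φ` is `E → B` degradable if some Kraus family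
`F_ℓ : H_E → H_B` with `∑ F_ℓᴴ F_ℓ = 1` sends `tr_B P(φ)` to `tr_E P(φ)`. -/
def EtoBDegradable {n e : ℕ} (φ : Fin n × Fin n × Fin e → ℂ) : Prop :=
  ∃ (r : ℕ) (F : Fin r → Matrix (Fin n) (Fin e) ℂ),
    (∑ ℓ, (F ℓ)ᴴ * F ℓ = 1) ∧ applyT F (trB φ) = trE φ

open Kronecker

lemma kron_conjT {m p : ℕ} (A : Matrix (Fin m) (Fin m) ℂ) (C : Matrix (Fin p) (Fin p) ℂ) :
    (A ⊗ₖ C)ᴴ = Aᴴ ⊗ₖ Cᴴ := by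
  ext ⟨a,b⟩ ⟨c,d⟩
  simp [Matrix.conjTranspose_apply, Matrix.kroneckerMap_apply]

lemma sum3 {α β γ M : Type*} [Fintype α] [Fintype β] [Fintype γ] [AddCommMonoid M]
    (f : α → β → γ → M) :
    ∑ j, ∑ c, ∑ d, f j c d = ∑ c, ∑ d, ∑ j, f j c d := by
  rw [Finset.sum_comm]
  exact Finset.sum_congr rfl fun c _ => Finset.sum_comm

lemma conj_entry {n m : ℕ} (W : Matrix (Fin n) (Fin n) ℂ)
    (M : Matrix (Fin n × Fin m) (Fin n × Fin m) ℂ) (a1 b1 : Fin n) (a2 b2 : Fin m) :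
    ((W ⊗ₖ (1 : Matrix (Fin m) (Fin m) ℂ)) * M * (W ⊗ₖ (1 : Matrix (Fin m) (Fin m) ℂ))ᴴ)
      (a1,a2) (b1,b2) = ∑ c, ∑ d, W a1 c * M (c,a2) (d,b2) * star (W b1 d) := by
  simp [Matrix.mul_apply, Matrix.kroneckerMap_apply, Matrix.one_apply,
    Fintype.sum_prod_type, Finset.sum_mul, Finset.mul_sum, apply_ite (star : ℂ → ℂ),
    ite_mul, mul_ite, Matrix.conjTranspose_apply]
  rw [Finset.sum_comm]

lemma trB_conj_s14 {n e : ℕ} (W : Matrix (Fin n) (Fin n) ℂ) (φ : Fin n × Fin n × Fin e → ℂ) :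
    trB (fun a => ∑ i, W a.1 i * φ (i, a.2)) =
      (W ⊗ₖ (1 : Matrix (Fin e) (Fin e) ℂ)) * trB φ * (W ⊗ₖ (1 : Matrix (Fin e) (Fin e) ℂ))ᴴ := by
  ext ⟨a1, a2⟩ ⟨b1, b2⟩
  rw [conj_entry]
  simp only [trB, Matrix.of_apply, star_sum, star_mul', Finset.sum_mul, Finset.mul_sum]
  rw [sum3, Finset.sum_comm]
  refine Finset.sum_congr rfl fun c _ => ?_
  refine Finset.sum_congr rfl fun d _ => Finset.sum_congr rfl fun j _ => ?_
  ring

lemma trE_conj_s14 {n e : ℕ} (W : Matrix (Fin n) (Fin n) ℂ) (φ : Fin n × Fin n × Fin e → ℂ) :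
    trE (fun a => ∑ i, W a.1 i * φ (i, a.2)) =
      (W ⊗ₖ (1 : Matrix (Fin n) (Fin n) ℂ)) * trE φ * (W ⊗ₖ (1 : Matrix (Fin n) (Fin n) ℂ))ᴴ := by
  ext ⟨a1, a2⟩ ⟨b1, b2⟩
  rw [conj_entry]
  simp only [trE, Matrix.of_apply, star_sum, star_mul', Finset.sum_mul, Finset.mul_sum]
  rw [sum3, Finset.sum_comm]
  refine Finset.sum_congr rfl fun c _ => ?_
  refine Finset.sum_congr rfl fun d _ => Finset.sum_congr rfl fun k _ => ?_
  ring

lemma applyT_conj {n e r : ℕ} (F : Fin r → Matrix (Fin n) (Fin e) ℂ)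
    (W : Matrix (Fin n) (Fin n) ℂ) (X : Matrix (Fin n × Fin e) (Fin n × Fin e) ℂ) :
    applyT F ((W ⊗ₖ (1 : Matrix (Fin e) (Fin e) ℂ)) * X * (W ⊗ₖ (1 : Matrix (Fin e) (Fin e) ℂ))ᴴ)
      = (W ⊗ₖ (1 : Matrix (Fin n) (Fin n) ℂ)) * applyT F X
        * (W ⊗ₖ (1 : Matrix (Fin n) (Fin n) ℂ))ᴴ := by
  unfold applyT
  rw [Finset.mul_sum, Finset.sum_mul]
  refine Finset.sum_congr rfl fun ℓ _ => ?_
  have key : ((1 : Matrix (Fin n) (Fin n) ℂ) ⊗ₖ F ℓ) * (W ⊗ₖ (1 : Matrix (Fin e) (Fin e) ℂ))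
      = (W ⊗ₖ (1 : Matrix (Fin n) (Fin n) ℂ)) * ((1 : Matrix (Fin n) (Fin n) ℂ) ⊗ₖ F ℓ) := by
    rw [← Matrix.mul_kronecker_mul, ← Matrix.mul_kronecker_mul]
    simp
  have key2 : (W ⊗ₖ (1 : Matrix (Fin e) (Fin e) ℂ))ᴴ * ((1 : Matrix (Fin n) (Fin n) ℂ) ⊗ₖ F ℓ)ᴴ
      = ((1 : Matrix (Fin n) (Fin n) ℂ) ⊗ₖ F ℓ)ᴴ * (W ⊗ₖ (1 : Matrix (Fin n) (Fin n) ℂ))ᴴ := by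
    rw [← Matrix.conjTranspose_mul, key, Matrix.conjTranspose_mul]
  rw [show ((1 : Matrix (Fin n) (Fin n) ℂ) ⊗ₖ F ℓ) * ((W ⊗ₖ (1 : Matrix (Fin e) (Fin e) ℂ)) * X
      * (W ⊗ₖ (1 : Matrix (Fin e) (Fin e) ℂ))ᴴ) * ((1 : Matrix (Fin n) (Fin n) ℂ) ⊗ₖ F ℓ)ᴴ
      = (((1 : Matrix (Fin n) (Fin n) ℂ) ⊗ₖ F ℓ) * (W ⊗ₖ (1 : Matrix (Fin e) (Fin e) ℂ))) * X
      * ((W ⊗ₖ (1 : Matrix (Fin e) (Fin e) ℂ))ᴴ * ((1 : Matrix (Fin n) (Fin n) ℂ) ⊗ₖ F ℓ)ᴴ) from by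
    simp only [Matrix.mul_assoc], key, key2]
  simp only [Matrix.mul_assoc]

lemma purify_W {n e : ℕ} [NeZero e] (U : Matrix (Fin n × Fin e) (Fin n × Fin e) ℂ)
    (W : Matrix (Fin n) (Fin n) ℂ) :
    purify U (fun a => ∑ i, W a.1 i * psiM (i, a.2)) =
      fun a => ∑ i, W a.1 i * purify U psiM (i, a.2) := by
  funext ⟨a1, a2, k⟩
  simp only [purify, psiM, Finset.sum_mul, Finset.mul_sum]
  rw [Finset.sum_comm]
  refine Finset.sum_congr rfl fun b _ => Finset.sum_congr rfl fun i _ => ?_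
  ring

/-- Theorem 5.3: if the channel output of the maximally entangled state is
not `E → B` degradable, then neither is the output of `(W_A ⊗ I)|ψ_M⟩` for any invertible
`W_A`. -/
theorem not_degradable_of_not_maxEntangled {n e : ℕ} [NeZero e]
    (U : Matrix (Fin n × Fin e) (Fin n × Fin e) ℂ)
    (hU : U ∈ Matrix.unitaryGroup (Fin n × Fin e) ℂ)
    (hnd : ¬ EtoBDegradable (purify U psiM)) :
    ∀ W : Matrix (Fin n) (Fin n) ℂ, IsUnit W →
      ¬ EtoBDegradable (purify U (fun a => ∑ i, W a.1 i * psiM (i, a.2))) := by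
  rintro W hW ⟨r, F, hF, hT⟩
  refine hnd ⟨r, F, hF, ?_⟩
  rw [purify_W, trB_conj_s14, trE_conj_s14, applyT_conj] at hT
  have hWdet : IsUnit W.det := (Matrix.isUnit_iff_isUnit_det W).mp hW
  have hG : IsUnit (W ⊗ₖ (1 : Matrix (Fin n) (Fin n) ℂ)) := by
    rw [Matrix.isUnit_iff_isUnit_det, Matrix.det_kronecker, Matrix.det_one, one_pow, mul_one]
    exact hWdet.pow _
  have hGH : IsUnit (W ⊗ₖ (1 : Matrix (Fin n) (Fin n) ℂ))ᴴ := by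
    rw [Matrix.isUnit_iff_isUnit_det, Matrix.det_conjTranspose]
    exact ((Matrix.isUnit_iff_isUnit_det _).mp hG).star
  exact hG.mul_left_cancel (hGH.mul_right_cancel (by
    simpa only [Matrix.mul_assoc] using hT))
end

section
/- Suppose the output of channel Φ_B (defined by Φ_B(ρ) = tr_E[U_{BE}(ρ ⊗ |0⟩⟨0|_E)U_{BE}*]) on the maximally entangled state is E→B degradable, i.e., there exist Kraus operators F_j: H_E → H_B with Σ F_j*F_j = I_E such that Σ_j (I_A⊗F_j) tr_B(P(U_{ABE}|ψ_M⟩|0⟩_E)) (I_A⊗F_j)* = tr_E(P(U_{ABE}|ψ_M⟩|0⟩_E)). Then the channel Φ_B is anti-degradable: the TPCP map T̂(X) = Σ_j F_j X F_j* satisfies T̂ ∘ Φ_E = Φ_B, where Φ_E(ρ) = tr_B[U_{BE}(ρ ⊗ |0⟩⟨0|_E)U_{BE}*] is the complementary channel. -/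
open Matrix


open Matrix

/-- `U_{BE}(ρ ⊗ |0⟩⟨0|_E)U_{BE}ᴴ`. -/
noncomputable def chanOut {n e : ℕ} [NeZero e]
    (U : Matrix (Fin n × Fin e) (Fin n × Fin e) ℂ) (ρ : Matrix (Fin n) (Fin n) ℂ) :
    Matrix (Fin n × Fin e) (Fin n × Fin e) ℂ :=
  U * (Matrix.kroneckerMap (· * ·) ρ
        (Matrix.of fun k l : Fin e => if k = 0 ∧ l = 0 then (1 : ℂ) else 0)) * Uᴴ

/-- The channel `Φ_B(ρ) = tr_E[U_{BE}(ρ ⊗ |0⟩⟨0|_E)U_{BE}ᴴ]`. -/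
noncomputable def PhiB {n e : ℕ} [NeZero e]
    (U : Matrix (Fin n × Fin e) (Fin n × Fin e) ℂ) (ρ : Matrix (Fin n) (Fin n) ℂ) :
    Matrix (Fin n) (Fin n) ℂ :=
  Matrix.of fun i j => ∑ k : Fin e, chanOut U ρ (i, k) (j, k)

/-- The complementary channel `Φ_E(ρ) = tr_B[U_{BE}(ρ ⊗ |0⟩⟨0|_E)U_{BE}ᴴ]`. -/
noncomputable def PhiE {n e : ℕ} [NeZero e]
    (U : Matrix (Fin n × Fin e) (Fin n × Fin e) ℂ) (ρ : Matrix (Fin n) (Fin n) ℂ) :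
    Matrix (Fin e) (Fin e) ℂ :=
  Matrix.of fun k l => ∑ i : Fin n, chanOut U ρ (i, k) (i, l)

set_option linter.unusedSectionVars false
section aux
variable {n e r : ℕ} [NeZero e]

lemma purify_eval (U : Matrix (Fin n × Fin e) (Fin n × Fin e) ℂ)
    (i j : Fin n) (k : Fin e) : purify U psiM (i, j, k) = U (j,k) (i,0) := by
  simp only [purify, psiM, Fintype.sum_prod_type]
  simp [mul_ite, ite_mul, Finset.sum_ite_eq, Finset.sum_ite_eq', eq_comm]

lemma chanOut_eval (U : Matrix (Fin n × Fin e) (Fin n × Fin e) ℂ)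
    (ρ : Matrix (Fin n) (Fin n) ℂ) (a b : Fin n × Fin e) :
    chanOut U ρ a b = ∑ c : Fin n, ∑ d : Fin n, ρ c d * (U a (c,0) * star (U b (d,0))) := by
  simp only [chanOut, Matrix.mul_apply, Fintype.sum_prod_type, Matrix.kroneckerMap_apply,
    Matrix.conjTranspose_apply, Matrix.of_apply]
  simp only [ite_and, mul_ite, ite_mul, mul_one, mul_zero, zero_mul, one_mul,
    Finset.sum_ite_eq, Finset.sum_ite_eq', Finset.mem_univ, if_true,
    Finset.sum_ite_irrel, Finset.sum_const_zero]
  rw [Finset.sum_comm]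
  refine Finset.sum_congr rfl fun c _ => ?_
  rw [Finset.sum_mul]
  refine Finset.sum_congr rfl fun d _ => ?_
  ring

/-- `M c d` : the `(c,d)` block of `trB (purify U psiM)`. -/
noncomputable def Mblk (U : Matrix (Fin n × Fin e) (Fin n × Fin e) ℂ) (c d : Fin n) :
    Matrix (Fin e) (Fin e) ℂ :=
  Matrix.of fun k l => ∑ m : Fin n, U (m,k) (c,0) * star (U (m,l) (d,0))

/-- `N c d` : the `(c,d)` block of `trE (purify U psiM)`. -/
noncomputable def Nblk (U : Matrix (Fin n × Fin e) (Fin n × Fin e) ℂ) (c d : Fin n) :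
    Matrix (Fin n) (Fin n) ℂ :=
  Matrix.of fun i j => ∑ k : Fin e, U (i,k) (c,0) * star (U (j,k) (d,0))

lemma PhiE_eq (U : Matrix (Fin n × Fin e) (Fin n × Fin e) ℂ)
    (ρ : Matrix (Fin n) (Fin n) ℂ) :
    PhiE U ρ = ∑ c : Fin n, ∑ d : Fin n, ρ c d • Mblk U c d := by
  ext k l
  simp only [PhiE, Matrix.of_apply, chanOut_eval, Matrix.sum_apply, Matrix.smul_apply,
    Mblk, smul_eq_mul, Finset.mul_sum]
  rw [Finset.sum_comm]
  refine Finset.sum_congr rfl fun c _ => ?_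
  rw [Finset.sum_comm]

lemma PhiB_eq (U : Matrix (Fin n × Fin e) (Fin n × Fin e) ℂ)
    (ρ : Matrix (Fin n) (Fin n) ℂ) :
    PhiB U ρ = ∑ c : Fin n, ∑ d : Fin n, ρ c d • Nblk U c d := by
  ext i j
  simp only [PhiB, Matrix.of_apply, chanOut_eval, Matrix.sum_apply, Matrix.smul_apply,
    Nblk, smul_eq_mul, Finset.mul_sum]
  rw [Finset.sum_comm]
  refine Finset.sum_congr rfl fun c _ => ?_
  rw [Finset.sum_comm]

lemma trB_purify (U : Matrix (Fin n × Fin e) (Fin n × Fin e) ℂ)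
    (c d : Fin n) (k l : Fin e) :
    trB (purify U psiM) (c,k) (d,l) = Mblk U c d k l := by
  simp [trB, Mblk, purify_eval]

lemma trE_purify (U : Matrix (Fin n × Fin e) (Fin n × Fin e) ℂ)
    (c d i j : Fin n) :
    trE (purify U psiM) (c,i) (d,j) = Nblk U c d i j := by
  simp [trE, Nblk, purify_eval]

lemma applyT_eval (F : Fin r → Matrix (Fin n) (Fin e) ℂ)
    (X : Matrix (Fin n × Fin e) (Fin n × Fin e) ℂ) (c d i j : Fin n) :
    applyT F X (c,i) (d,j) =
      (∑ ℓ, F ℓ * (Matrix.of fun k l => X (c,k) (d,l)) * (F ℓ)ᴴ) i j := by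
  simp only [applyT, Matrix.sum_apply, Matrix.mul_apply, Fintype.sum_prod_type,
    Matrix.kroneckerMap_apply, Matrix.conjTranspose_apply, Matrix.one_apply,
    Matrix.of_apply]
  refine Finset.sum_congr rfl fun ℓ _ => ?_
  simp only [ite_mul, mul_ite, one_mul, zero_mul, mul_one, mul_zero,
    Finset.sum_ite_eq, Finset.sum_ite_eq', Finset.mem_univ, if_true,
    Finset.sum_ite_irrel, Finset.sum_const_zero, star_one, star_zero, apply_ite (star : ℂ → ℂ)]

end aux

/-- Corollary 5.2: if the output of `Φ_B` on the maximally entangled state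
is `E → B` degradable via the Kraus family `F`, then `T̂ ∘ Φ_E = Φ_B` where
`T̂(X) = ∑ ℓ F_ℓ X F_ℓᴴ`; i.e. the channel `Φ_B` is anti-degradable. -/
theorem antidegradable_of_maxEntangled_degradable {n e r : ℕ} [NeZero e]
    (U : Matrix (Fin n × Fin e) (Fin n × Fin e) ℂ)
    (hU : U ∈ Matrix.unitaryGroup (Fin n × Fin e) ℂ)
    (F : Fin r → Matrix (Fin n) (Fin e) ℂ)
    (hF : ∑ ℓ, (F ℓ)ᴴ * F ℓ = 1)
    (hT : applyT F (trB (purify U psiM)) = trE (purify U psiM)) :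
    ∀ ρ : Matrix (Fin n) (Fin n) ℂ, ∑ ℓ, F ℓ * PhiE U ρ * (F ℓ)ᴴ = PhiB U ρ := by
  intro ρ
  have key : ∀ c d : Fin n, ∑ ℓ, F ℓ * Mblk U c d * (F ℓ)ᴴ = Nblk U c d := by
    intro c d
    ext i j
    have h1 := congrFun (congrFun hT ((c,i))) ((d,j))
    rw [applyT_eval, trE_purify] at h1
    have h2 : (Matrix.of fun k l => trB (purify U psiM) (c,k) (d,l)) = Mblk U c d := by
      ext k l; exact trB_purify U c d k l
    rw [h2] at h1
    exact h1
  rw [PhiE_eq, PhiB_eq]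
  calc ∑ ℓ, F ℓ * (∑ c : Fin n, ∑ d : Fin n, ρ c d • Mblk U c d) * (F ℓ)ᴴ
      = ∑ c : Fin n, ∑ d : Fin n, ρ c d • ∑ ℓ, F ℓ * Mblk U c d * (F ℓ)ᴴ := by
        simp only [Matrix.mul_sum, Matrix.sum_mul, Matrix.mul_smul, Matrix.smul_mul]
        rw [Finset.sum_comm]
        refine Finset.sum_congr rfl fun c _ => ?_
        rw [Finset.sum_comm]
        refine Finset.sum_congr rfl fun d _ => ?_
        rw [Finset.smul_sum]
    _ = ∑ c : Fin n, ∑ d : Fin n, ρ c d • Nblk U c d := by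
        refine Finset.sum_congr rfl fun c _ => Finset.sum_congr rfl fun d _ => ?_
        rw [key]
end

section
/- For the qubit depolarizing channel with parameter ε, 0 ≤ ε ≤ 3/4, define (with α = √(1−ε), β = √(ε/3)) the matrices R_0 = S_0^t, R_1 = S_1^t where S_0 = [[α, β, 0, 0],[0, 0, β, β]] ∈ M_{2,4} and S_1 = [[0, 0, −β, β],[α, −β, 0, 0]] ∈ M_{2,4}, and assume α > β. Then the singular values of R_0R_0* − R_1R_1* ∈ M_4 are {2αβ, 2αβ, 2β², 2β²} and the singular values of S_0S_0* − S_1S_1* ∈ M_2 are {α²−β², α²−β²}; consequently (1/2)‖R_0R_0* − R_1R_1*‖₁ = 2β(α+β) and (1/2)‖S_0S_0* − S_1S_1*‖₁ = (α+β)(α−β). -/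
open Matrix

/-- The singular values of a (rectangular) complex matrix: square roots of the
eigenvalues of `Aᴴ * A`. -/
noncomputable def singVals {m n : ℕ} (A : Matrix (Fin m) (Fin n) ℂ) : Fin n → ℝ :=
  fun i => Real.sqrt ((Matrix.isHermitian_conjTranspose_mul_self A).eigenvalues i)

/-- The trace norm: sum of the singular values. -/
noncomputable def traceNorm {m n : ℕ} (A : Matrix (Fin m) (Fin n) ℂ) : ℝ :=
  ∑ i, singVals A i

section Aux

set_option maxHeartbeats 1000000

lemma eig_mem_of_diag' {n : ℕ} {A : Matrix (Fin n) (Fin n) ℂ} (hA : A.IsHermitian)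
    (d : Fin n → ℝ) (hAd : A = Matrix.diagonal (fun i => (d i : ℂ))) (i : Fin n) :
    ∃ j, hA.eigenvalues i = d j := by
  subst hAd
  have h := hA.eigenvalues_mem_spectrum_real i
  rw [spectrum.mem_iff] at h
  by_contra hc
  push_neg at hc
  apply h
  have heq : (algebraMap ℝ (Matrix (Fin n) (Fin n) ℂ)) (hA.eigenvalues i)
        - Matrix.diagonal (fun j => (d j : ℂ))
      = Matrix.diagonal (fun j => ((hA.eigenvalues i : ℂ) - d j)) := by
    ext j k
    by_cases hjk : j = k <;>
      simp [Matrix.diagonal_apply, hjk, Matrix.algebraMap_matrix_apply]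
  rw [heq, Matrix.isUnit_iff_isUnit_det, Matrix.det_diagonal]
  refine Ne.isUnit (Finset.prod_ne_zero_iff.2 fun j _ => ?_)
  rw [sub_ne_zero]
  exact_mod_cast hc j

lemma trace_eq_sum_eig' {n : ℕ} {A : Matrix (Fin n) (Fin n) ℂ} (hA : A.IsHermitian) :
    A.trace = ∑ i, (hA.eigenvalues i : ℂ) := by
  exact hA.trace_eq_sum_eigenvalues

lemma count22' (a b : ℝ) (f : Fin 4 → ℝ) (hf : ∀ i, f i = a ∨ f i = b)
    (hsum : f 0 + f 1 + f 2 + f 3 = 2 * a + 2 * b) :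
    Finset.univ.val.map f = ({a, a, b, b} : Multiset ℝ) := by
  have key : Finset.univ.val.map f = ({f 0, f 1, f 2, f 3} : Multiset ℝ) := rfl
  rw [key]
  by_cases hab : a = b
  · subst hab
    have h' : ∀ i, f i = a := fun i => (hf i).elim id id
    rw [h' 0, h' 1, h' 2, h' 3]
  · rcases hf 0 with h0 | h0 <;> rcases hf 1 with h1 | h1 <;> rcases hf 2 with h2 | h2 <;>
      rcases hf 3 with h3 | h3 <;> rw [h0, h1, h2, h3] at hsum ⊢ <;>
      first
        | rfl
        | exact absurd (by linarith) hab
        | (simp only [Multiset.insert_eq_cons, ← Multiset.cons_zero]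
           repeat rw [Multiset.cons_swap b a])

lemma count2' (c : ℝ) (f : Fin 2 → ℝ) (hf : ∀ i, f i = c) :
    Finset.univ.val.map f = ({c, c} : Multiset ℝ) := by
  have key : Finset.univ.val.map f = ({f 0, f 1} : Multiset ℝ) := rfl
  rw [key, hf 0, hf 1]

lemma M4_eq (α β : ℝ)
    (S₀ S₁ : Matrix (Fin 2) (Fin 4) ℂ)
    (hS₀ : S₀ = !![(α : ℂ), (β : ℂ), 0, 0; 0, 0, (β : ℂ), (β : ℂ)])
    (hS₁ : S₁ = !![0, 0, -(β : ℂ), (β : ℂ); (α : ℂ), -(β : ℂ), 0, 0])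
    (R₀ R₁ : Matrix (Fin 4) (Fin 2) ℂ)
    (hR₀ : R₀ = S₀ᵀ) (hR₁ : R₁ = S₁ᵀ) :
    R₀ * R₀ᴴ - R₁ * R₁ᴴ
      = !![0, ((2*α*β : ℝ) : ℂ), 0, 0; ((2*α*β : ℝ) : ℂ), 0, 0, 0;
           0, 0, 0, ((2*β^2 : ℝ) : ℂ); 0, 0, ((2*β^2 : ℝ) : ℂ), 0] := by
  subst hS₀ hS₁ hR₀ hR₁
  ext i j
  fin_cases i <;> fin_cases j <;>
    simp [Matrix.mul_apply, Fin.sum_univ_two, Matrix.transpose_apply, Matrix.conjTranspose_apply,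
      Matrix.vecHead, Matrix.vecTail, Complex.ext_iff, ← Complex.ofReal_pow] <;>
    push_cast <;> ring_nf

lemma B4_eq (α β : ℝ) (M : Matrix (Fin 4) (Fin 4) ℂ)
    (hM : M = !![0, ((2*α*β : ℝ) : ℂ), 0, 0; ((2*α*β : ℝ) : ℂ), 0, 0, 0;
                 0, 0, 0, ((2*β^2 : ℝ) : ℂ); 0, 0, ((2*β^2 : ℝ) : ℂ), 0]) :
    Mᴴ * M = Matrix.diagonal (fun i =>
        ((![4 * α ^ 2 * β ^ 2, 4 * α ^ 2 * β ^ 2, 4 * β ^ 4, 4 * β ^ 4] i : ℝ) : ℂ)) := by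
  subst hM
  ext i j
  fin_cases i <;> fin_cases j <;>
    simp [Matrix.mul_apply, Fin.sum_univ_four, Matrix.conjTranspose_apply, Matrix.diagonal_apply,
      Matrix.vecHead, Matrix.vecTail, map_ofNat] <;> push_cast <;> ring

lemma M2_eq (α β : ℝ)
    (S₀ S₁ : Matrix (Fin 2) (Fin 4) ℂ)
    (hS₀ : S₀ = !![(α : ℂ), (β : ℂ), 0, 0; 0, 0, (β : ℂ), (β : ℂ)])
    (hS₁ : S₁ = !![0, 0, -(β : ℂ), (β : ℂ); (α : ℂ), -(β : ℂ), 0, 0]) :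
    S₀ * S₀ᴴ - S₁ * S₁ᴴ = !![((α^2 - β^2 : ℝ) : ℂ), 0; 0, ((β^2 - α^2 : ℝ) : ℂ)] := by
  subst hS₀ hS₁
  ext i j
  fin_cases i <;> fin_cases j <;>
    simp [Matrix.mul_apply, Fin.sum_univ_four, Matrix.transpose_apply, Matrix.conjTranspose_apply,
      Matrix.vecMul, dotProduct, Matrix.vecHead, Matrix.vecTail, Complex.ext_iff,
      ← Complex.ofReal_pow] <;>
    push_cast <;> ring_nf

lemma B2_eq (α β : ℝ) (M : Matrix (Fin 2) (Fin 2) ℂ)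
    (hM : M = !![((α^2 - β^2 : ℝ) : ℂ), 0; 0, ((β^2 - α^2 : ℝ) : ℂ)]) :
    Mᴴ * M = Matrix.diagonal (fun i =>
        ((![(α ^ 2 - β ^ 2) ^ 2, (α ^ 2 - β ^ 2) ^ 2] i : ℝ) : ℂ)) := by
  subst hM
  ext i j
  fin_cases i <;> fin_cases j <;>
    simp [Matrix.mul_apply, Fin.sum_univ_two, Matrix.conjTranspose_apply, Matrix.diagonal_apply,
      Matrix.vecHead, Matrix.vecTail, map_ofNat] <;> push_cast <;> ring

end Aux

set_option maxHeartbeats 1000000 in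
/-- for the depolarizing-channel matrices with `α = √(1−ε)`, `β = √(ε/3)`,
`α > β`, the singular values of `R₀R₀ᴴ − R₁R₁ᴴ` are `{2αβ, 2αβ, 2β², 2β²}`, those of
`S₀S₀ᴴ − S₁S₁ᴴ` are `{α²−β², α²−β²}`, and hence the trace distances are `2β(α+β)` and
`(α+β)(α−β)` respectively. -/
theorem depolarizing_singular_values (ε α β : ℝ)
    (hε0 : 0 ≤ ε) (hε1 : ε ≤ 3 / 4)
    (hα : α = Real.sqrt (1 - ε)) (hβ : β = Real.sqrt (ε / 3)) (hαβ : β < α)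
    (S₀ S₁ : Matrix (Fin 2) (Fin 4) ℂ)
    (hS₀ : S₀ = !![(α : ℂ), (β : ℂ), 0, 0; 0, 0, (β : ℂ), (β : ℂ)])
    (hS₁ : S₁ = !![0, 0, -(β : ℂ), (β : ℂ); (α : ℂ), -(β : ℂ), 0, 0])
    (R₀ R₁ : Matrix (Fin 4) (Fin 2) ℂ)
    (hR₀ : R₀ = S₀ᵀ) (hR₁ : R₁ = S₁ᵀ) :
    (Finset.univ.val.map (singVals (R₀ * R₀ᴴ - R₁ * R₁ᴴ))
        = ({2 * α * β, 2 * α * β, 2 * β ^ 2, 2 * β ^ 2} : Multiset ℝ)) ∧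
    (Finset.univ.val.map (singVals (S₀ * S₀ᴴ - S₁ * S₁ᴴ))
        = ({α ^ 2 - β ^ 2, α ^ 2 - β ^ 2} : Multiset ℝ)) ∧
    (1 / 2 : ℝ) * traceNorm (R₀ * R₀ᴴ - R₁ * R₁ᴴ) = 2 * β * (α + β) ∧
    (1 / 2 : ℝ) * traceNorm (S₀ * S₀ᴴ - S₁ * S₁ᴴ) = (α + β) * (α - β) := by
  have hα0 : 0 ≤ α := hα ▸ Real.sqrt_nonneg _
  have hβ0 : 0 ≤ β := hβ ▸ Real.sqrt_nonneg _
  have hβ2 : β ^ 2 ≤ α ^ 2 := by nlinarith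
  set M := R₀ * R₀ᴴ - R₁ * R₁ᴴ with hM
  set N := S₀ * S₀ᴴ - S₁ * S₁ᴴ with hN
  have hB4 : Mᴴ * M = Matrix.diagonal (fun i =>
      ((![4 * α ^ 2 * β ^ 2, 4 * α ^ 2 * β ^ 2, 4 * β ^ 4, 4 * β ^ 4] i : ℝ) : ℂ)) :=
    B4_eq α β M (M4_eq α β S₀ S₁ hS₀ hS₁ R₀ R₁ hR₀ hR₁)
  have hB2 : Nᴴ * N = Matrix.diagonal (fun i =>
      ((![(α ^ 2 - β ^ 2) ^ 2, (α ^ 2 - β ^ 2) ^ 2] i : ℝ) : ℂ)) :=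
    B2_eq α β N (M2_eq α β S₀ S₁ hS₀ hS₁)
  set eig4 := (Matrix.isHermitian_conjTranspose_mul_self M).eigenvalues with heig4
  set eig2 := (Matrix.isHermitian_conjTranspose_mul_self N).eigenvalues with heig2
  -- eigenvalue membership
  have hmem4 : ∀ i, eig4 i = 4 * α ^ 2 * β ^ 2 ∨ eig4 i = 4 * β ^ 4 := by
    intro i
    obtain ⟨j, hj⟩ := eig_mem_of_diag' _ _ hB4 i
    fin_cases j <;> simp at hj <;>
      first
        | exact Or.inl hj
        | exact Or.inr hj
  have hmem2 : ∀ i, eig2 i = (α ^ 2 - β ^ 2) ^ 2 := by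
    intro i
    obtain ⟨j, hj⟩ := eig_mem_of_diag' _ _ hB2 i
    fin_cases j <;> simpa using hj
  -- trace / sum
  have ht : Matrix.trace (Matrix.diagonal (fun i =>
      ((![4 * α ^ 2 * β ^ 2, 4 * α ^ 2 * β ^ 2, 4 * β ^ 4, 4 * β ^ 4] i : ℝ) : ℂ)))
      = ∑ i, (eig4 i : ℂ) := by
    rw [← hB4]; exact trace_eq_sum_eig' _
  rw [Matrix.trace_diagonal] at ht
  simp only [Fin.sum_univ_four, Matrix.cons_val_zero, Matrix.cons_val_one, Matrix.head_cons,
    Matrix.cons_val_two, Matrix.cons_val_three, Matrix.tail_cons] at ht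
  have hsum4 : eig4 0 + eig4 1 + eig4 2 + eig4 3
      = 2 * (4 * α ^ 2 * β ^ 2) + 2 * (4 * β ^ 4) := by
    have h' : (4 * α ^ 2 * β ^ 2 + 4 * α ^ 2 * β ^ 2 + 4 * β ^ 4 + 4 * β ^ 4 : ℝ)
        = eig4 0 + eig4 1 + eig4 2 + eig4 3 := by exact_mod_cast ht
    linarith
  -- multiset of eigenvalues
  have hms4 : Finset.univ.val.map eig4
      = ({4 * α ^ 2 * β ^ 2, 4 * α ^ 2 * β ^ 2, 4 * β ^ 4, 4 * β ^ 4} : Multiset ℝ) :=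
    count22' _ _ _ hmem4 hsum4
  have hms2 : Finset.univ.val.map eig2
      = ({(α ^ 2 - β ^ 2) ^ 2, (α ^ 2 - β ^ 2) ^ 2} : Multiset ℝ) :=
    count2' _ _ hmem2
  -- singular values
  have hsv4 : Finset.univ.val.map (singVals M)
      = ({2 * α * β, 2 * α * β, 2 * β ^ 2, 2 * β ^ 2} : Multiset ℝ) := by
    have : Finset.univ.val.map (singVals M)
        = Multiset.map Real.sqrt (Finset.univ.val.map eig4) := by
      rw [Multiset.map_map]; rfl
    rw [this, hms4]
    simp only [Multiset.insert_eq_cons, Multiset.map_cons, Multiset.map_singleton]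
    rw [show (4 * α ^ 2 * β ^ 2 : ℝ) = (2 * α * β) ^ 2 by ring,
      show (4 * β ^ 4 : ℝ) = (2 * β ^ 2) ^ 2 by ring,
      Real.sqrt_sq (by positivity), Real.sqrt_sq (by positivity)]
  have hsv2 : Finset.univ.val.map (singVals N)
      = ({α ^ 2 - β ^ 2, α ^ 2 - β ^ 2} : Multiset ℝ) := by
    have : Finset.univ.val.map (singVals N)
        = Multiset.map Real.sqrt (Finset.univ.val.map eig2) := by
      rw [Multiset.map_map]; rfl
    rw [this, hms2]
    simp only [Multiset.insert_eq_cons, Multiset.map_cons, Multiset.map_singleton]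
    rw [Real.sqrt_sq (by linarith)]
  refine ⟨hsv4, hsv2, ?_, ?_⟩
  · have htn : traceNorm M = (Finset.univ.val.map (singVals M)).sum := rfl
    rw [htn, hsv4]
    simp only [Multiset.insert_eq_cons, Multiset.sum_cons, Multiset.sum_singleton]
    ring
  · have htn : traceNorm N = (Finset.univ.val.map (singVals N)).sum := rfl
    rw [htn, hsv2]
    simp only [Multiset.insert_eq_cons, Multiset.sum_cons, Multiset.sum_singleton]
    ring
end
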